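/- (Bassalygo–Elias inequality) For integers n ≥ 1, 1 ≤ d ≤ n and 0 ≤ w ≤ n, A(n,d) · C(n,w) ≤ 2^n · A(n,d,w), where C(n,w) denotes the binomial coefficient. -/

import Mathlib

/-- The weight of a binary word: the number of its nonzero entries. -/
def wt {n : ℕ} (x : Fin n → Bool) : ℕ :=
  (Finset.univ.filter (fun i => x i = true)).card

/-- `A n d` is the maximum size of a binary code of length `n` and minimum Hamming
distance at least `d`. -/
noncomputable def A (n d : ℕ) : ℕ :=
  sSup {m | ∃ C : Finset (Fin n → Bool), C.card = m ∧
    ∀ c ∈ C, ∀ c' ∈ C, c ≠ c' → d ≤ hammingDist c c'}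

/-- `Acw n d w` is the maximum size of a binary code of length `n`, constant weight `w`,
and minimum Hamming distance at least `d`. -/
noncomputable def Acw (n d w : ℕ) : ℕ :=
  sSup {m | ∃ C : Finset (Fin n → Bool), C.card = m ∧ (∀ c ∈ C, wt c = w) ∧
    ∀ c ∈ C, ∀ c' ∈ C, c ≠ c' → d ≤ hammingDist c c'}

lemma tau_invol {n : ℕ} (x : Fin n → Bool) :
    Function.Involutive (fun c : Fin n → Bool => fun i => xor (c i) (x i)) := by
  intro c; funext i; simp

lemma hammingDist_tau {n : ℕ} (x a b : Fin n → Bool) :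
    hammingDist (fun i => xor (a i) (x i)) (fun i => xor (b i) (x i)) = hammingDist a b := by
  show (Finset.univ.filter fun i => xor (a i) (x i) ≠ xor (b i) (x i)).card
      = (Finset.univ.filter fun i => a i ≠ b i).card
  congr 1
  apply Finset.filter_congr
  intro i _
  constructor <;> intro h <;> revert h <;> cases a i <;> cases b i <;> cases x i <;> decide

lemma wt_tau {n : ℕ} (a b : Fin n → Bool) :
    wt (fun i => xor (a i) (b i)) = hammingDist a b := by
  show (Finset.univ.filter fun i => xor (a i) (b i) = true).card
      = (Finset.univ.filter fun i => a i ≠ b i).card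
  congr 1
  apply Finset.filter_congr
  intro i _
  cases a i <;> cases b i <;> decide

lemma card_wt_eq (n w : ℕ) :
    (Finset.univ.filter (fun y : Fin n → Bool => wt y = w)).card = n.choose w := by
  rw [show n.choose w = ((Finset.univ : Finset (Fin n)).powersetCard w).card by
    rw [Finset.card_powersetCard]; simp]
  apply Finset.card_bij (fun y _ => Finset.univ.filter (fun i => y i = true))
  · intro y hy
    simp only [Finset.mem_filter, Finset.mem_univ, true_and] at hy
    simp only [Finset.mem_powersetCard]
    exact ⟨Finset.filter_subset _ _, hy⟩
  · intro a ha b hb hab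
    funext i
    have := Finset.ext_iff.mp hab i
    simp only [Finset.mem_filter, Finset.mem_univ, true_and] at this
    cases h1 : a i <;> cases h2 : b i <;> simp [h1, h2] at this ⊢
  · intro s hs
    simp only [Finset.mem_powersetCard] at hs
    refine ⟨fun i => i ∈ s, ?_, ?_⟩
    · refine Finset.mem_filter.mpr ⟨Finset.mem_univ _, ?_⟩; simp only [wt]
      rw [← hs.2]; congr 1; ext i; simp
    · ext i; simp

lemma A_set_mem (n d : ℕ) :
    ∃ C : Finset (Fin n → Bool), C.card = A n d ∧
      ∀ c ∈ C, ∀ c' ∈ C, c ≠ c' → d ≤ hammingDist c c' := by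
  have hmem : A n d ∈ {m | ∃ C : Finset (Fin n → Bool), C.card = m ∧
      ∀ c ∈ C, ∀ c' ∈ C, c ≠ c' → d ≤ hammingDist c c'} := by
    apply Nat.sSup_mem
    · exact ⟨0, ∅, by simp⟩
    · refine ⟨2 ^ n, ?_⟩
      rintro m ⟨C, hC, -⟩
      calc m = C.card := hC.symm
        _ ≤ Fintype.card (Fin n → Bool) := Finset.card_le_univ C
        _ = 2 ^ n := by simp
  obtain ⟨C, hC⟩ := hmem
  exact ⟨C, hC⟩

lemma Acw_bdd (n d w : ℕ) : BddAbove {m | ∃ C : Finset (Fin n → Bool), C.card = m ∧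
    (∀ c ∈ C, wt c = w) ∧ ∀ c ∈ C, ∀ c' ∈ C, c ≠ c' → d ≤ hammingDist c c'} := by
  refine ⟨2 ^ n, ?_⟩
  rintro m ⟨C, hC, -⟩
  calc m = C.card := hC.symm
    _ ≤ Fintype.card (Fin n → Bool) := Finset.card_le_univ C
    _ = 2 ^ n := by simp

/-- Bassalygo–Elias inequality: `A(n,d) · C(n,w) ≤ 2^n · A(n,d,w)`. -/
theorem bassalygo_elias (n d w : ℕ) (hn : 1 ≤ n) (hd : 1 ≤ d) (hdn : d ≤ n) (hw : w ≤ n) :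
    A n d * n.choose w ≤ 2 ^ n * Acw n d w := by
  obtain ⟨C, hCcard, hCdist⟩ := A_set_mem n d
  -- key: for each x, the filtered translate has card ≤ Acw n d w
  have key : ∀ x : Fin n → Bool,
      (C.filter fun c => hammingDist c x = w).card ≤ Acw n d w := by
    intro x
    apply le_csSup (Acw_bdd n d w)
    refine ⟨(C.filter fun c => hammingDist c x = w).image
      (fun c => fun i => xor (c i) (x i)), ?_, ?_, ?_⟩
    · apply Finset.card_image_of_injective
      exact (tau_invol x).injective
    · intro c hc
      simp only [Finset.mem_image, Finset.mem_filter] at hc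
      obtain ⟨a, ⟨-, ha⟩, rfl⟩ := hc
      rw [wt_tau]; exact ha
    · intro c hc c' hc' hne
      simp only [Finset.mem_image, Finset.mem_filter] at hc hc'
      obtain ⟨a, ⟨haC, -⟩, rfl⟩ := hc
      obtain ⟨b, ⟨hbC, -⟩, rfl⟩ := hc'
      rw [hammingDist_tau]
      exact hCdist a haC b hbC (fun h => hne (by rw [h]))
  -- double counting
  have count : ∀ c : Fin n → Bool,
      (Finset.univ.filter fun x => hammingDist c x = w).card = n.choose w := by
    intro c
    rw [← card_wt_eq n w]
    apply Finset.card_bij (fun x _ => fun i => xor (c i) (x i))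
    · intro x hx
      simp only [Finset.mem_filter, Finset.mem_univ, true_and] at hx ⊢
      rw [wt_tau]; exact hx
    · intro a _ b _ hab
      funext i
      have := congrFun hab i
      try simp only at this
      cases h1 : c i <;> cases h2 : a i <;> cases h3 : b i <;>
        simp [h1, h2, h3] at this ⊢
    · intro y hy
      simp only [Finset.mem_filter, Finset.mem_univ, true_and] at hy
      have hxy : (fun i => xor (c i) (xor (c i) (y i))) = y := by
        funext i; simp
      refine ⟨fun i => xor (c i) (y i), ?_, ?_⟩
      · simp only [Finset.mem_filter, Finset.mem_univ, true_and]
        rw [← wt_tau c (fun i => xor (c i) (y i))]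
        have : (fun i => xor (c i) ((fun i => xor (c i) (y i)) i)) = y := by
          funext i; simp
        rw [this, hy]
      · funext i; simp
  have swap : ∑ x : Fin n → Bool, (C.filter fun c => hammingDist c x = w).card
      = C.card * n.choose w := by
    have : ∀ x : Fin n → Bool, (C.filter fun c => hammingDist c x = w).card
        = ∑ c ∈ C, if hammingDist c x = w then 1 else 0 := by
      intro x; rw [Finset.card_filter]
    simp_rw [this]
    rw [Finset.sum_comm]
    have : ∀ c ∈ C, (∑ x : Fin n → Bool, if hammingDist c x = w then 1 else 0)
        = n.choose w := by
      intro c _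
      rw [← count c, Finset.card_filter]
    rw [Finset.sum_congr rfl this, Finset.sum_const, smul_eq_mul]
  calc A n d * n.choose w = C.card * n.choose w := by rw [hCcard]
    _ = ∑ x : Fin n → Bool, (C.filter fun c => hammingDist c x = w).card := swap.symm
    _ ≤ ∑ _x : Fin n → Bool, Acw n d w := Finset.sum_le_sum fun x _ => key x
    _ = 2 ^ n * Acw n d w := by
        rw [Finset.sum_const, smul_eq_mul]
        congr 1
        simp [Fintype.card_fun]
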